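/- Let M be a compact smooth manifold without boundary, e : M → ℝ^k a smooth embedding, and (ν, r) an ε-tubular neighborhood of e. Then for every v ∈ ℝ^k with v ∉ ν and every y ∈ M one has ‖v − e(y)‖ ≥ ε. Consequently the Alexander–Atiyah duality map α(v, y) = v − e(y) sends (ℝ^k − ν) × M into the complement ℝ^k − B_ε(0) of the open ball of radius ε about the origin. -/

import Mathlib

set_option maxHeartbeats 1000000


open Metric Set Manifold

/-- `e : M → ℝ^k` is a smooth embedding: a smooth map which is a topological embedding
and whose differential is injective at every point. -/
def IsSmoothEmbedding {n k : ℕ} {M : Type*} [TopologicalSpace M]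
    [ChartedSpace (EuclideanSpace ℝ (Fin n)) M] [IsManifold (𝓡 n) (⊤ : ℕ∞) M]
    (e : M → EuclideanSpace ℝ (Fin k)) : Prop :=
  ContMDiff (𝓡 n) (𝓡 k) (⊤ : ℕ∞) e ∧ Topology.IsEmbedding e ∧
    ∀ y : M, Function.Injective (mfderiv (𝓡 n) (𝓡 k) e y)

/-- `(ν, r)` is an `ε`-tubular neighborhood of the embedding `e : M → ℝ^k`:
`ν` is an open set containing `e(M)` and `r : ν → e(M)` is a continuous retraction such that
(1) `‖x - r x‖ ≤ ‖x - e y‖` for all `x ∈ ν`, `y ∈ M`, with equality iff `r x = e y`; and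
(2) the fiber `r⁻¹(e y)` is the open `ε`-ball around `e y` in the affine subspace
`e y + (range (mfderiv e y))ᗮ`. -/
def IsTubularNbhd {n k : ℕ} {M : Type*} [TopologicalSpace M]
    [ChartedSpace (EuclideanSpace ℝ (Fin n)) M] [IsManifold (𝓡 n) (⊤ : ℕ∞) M]
    (e : M → EuclideanSpace ℝ (Fin k)) (ε : ℝ) (ν : Set (EuclideanSpace ℝ (Fin k)))
    (r : EuclideanSpace ℝ (Fin k) → EuclideanSpace ℝ (Fin k)) : Prop :=
  IsOpen ν ∧ Set.range e ⊆ ν ∧ ContinuousOn r ν ∧ (∀ x ∈ ν, r x ∈ Set.range e) ∧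
  (∀ y : M, r (e y) = e y) ∧
  (∀ x ∈ ν, ∀ y : M, ‖x - r x‖ ≤ ‖x - e y‖ ∧ (‖x - r x‖ = ‖x - e y‖ ↔ r x = e y)) ∧
  (∀ y : M, ∀ x : EuclideanSpace ℝ (Fin k), (x ∈ ν ∧ r x = e y) ↔
    ∃ v : EuclideanSpace ℝ (Fin k),
      (∀ w : TangentSpace (𝓡 n) y,
        inner (𝕜 := ℝ) v (mfderiv (𝓡 n) (𝓡 k) e y w : EuclideanSpace ℝ (Fin k)) = 0) ∧
      ‖v‖ < ε ∧ x = e y + v)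

/-- Points outside an `ε`-tubular neighborhood are at distance at least `ε` from `e(M)`;
hence the Alexander–Atiyah duality map `(v, y) ↦ v - e y` sends `(ℝ^k - ν) × M` into the
complement of the open `ε`-ball about the origin. -/
theorem stmt5 {n k : ℕ} {M : Type*} [TopologicalSpace M]
    [ChartedSpace (EuclideanSpace ℝ (Fin n)) M] [IsManifold (𝓡 n) (⊤ : ℕ∞) M]
    [CompactSpace M]
    (e : M → EuclideanSpace ℝ (Fin k)) (he : IsSmoothEmbedding (n := n) e)
    (ε : ℝ) (hε : 0 < ε) (ν : Set (EuclideanSpace ℝ (Fin k)))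
    (r : EuclideanSpace ℝ (Fin k) → EuclideanSpace ℝ (Fin k))
    (h : IsTubularNbhd (n := n) e ε ν r) :
    ∀ v : EuclideanSpace ℝ (Fin k), v ∉ ν → ∀ y : M,
      ε ≤ ‖v - e y‖ ∧ v - e y ∉ Metric.ball (0 : EuclideanSpace ℝ (Fin k)) ε := by
  obtain ⟨hν_open, hrange, hrcont, hrmem, hretr, hmin, hfiber⟩ := h
  intro v hv y
  have : Nonempty M := ⟨y⟩
  have hce : Continuous e := he.2.1.continuous
  have key : ε ≤ ‖v - e y‖ := by
    by_contra hlt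
    push_neg at hlt
    -- nearest point e y₀ to v
    obtain ⟨y₀, -, hy₀⟩ := isCompact_univ.exists_isMinOn (Set.univ_nonempty)
      (Continuous.continuousOn (by continuity : Continuous fun y' : M => ‖v - e y'‖))
    have hy₀min : ∀ y' : M, ‖v - e y₀‖ ≤ ‖v - e y'‖ := fun y' => hy₀ (Set.mem_univ y')
    have hvy₀ : ‖v - e y₀‖ < ε := lt_of_le_of_lt (hy₀min y) hlt
    -- find small t > 0 with x_t ∈ ν
    have hgc : Continuous fun t : ℝ => e y₀ + t • (v - e y₀) := by continuity
    have h0 : (fun t : ℝ => e y₀ + t • (v - e y₀)) 0 ∈ ν := by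
      simpa using hrange ⟨y₀, rfl⟩
    obtain ⟨δ, hδpos, hδ⟩ := Metric.isOpen_iff.1 (hν_open.preimage hgc) 0 h0
    set t : ℝ := min (δ / 2) 1 with ht_def
    have ht0 : 0 < t := lt_min (by linarith) one_pos
    have ht1 : t ≤ 1 := min_le_right _ _
    set x : EuclideanSpace ℝ (Fin k) := e y₀ + t • (v - e y₀) with hx_def
    have hxν : x ∈ ν := by
      apply hδ
      simp only [Metric.mem_ball, Real.dist_eq, sub_zero]
      have : |t| = t := abs_of_pos ht0
      rw [this]
      exact lt_of_le_of_lt (min_le_left _ _) (by linarith)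
    have hxy₀ : x - e y₀ = t • (v - e y₀) := by rw [hx_def]; abel
    have hnxy₀ : ‖x - e y₀‖ = t * ‖v - e y₀‖ := by
      rw [hxy₀, norm_smul, Real.norm_eq_abs, abs_of_pos ht0]
    have hvx : ‖v - x‖ = (1 - t) * ‖v - e y₀‖ := by
      have : v - x = (1 - t) • (v - e y₀) := by
        rw [hx_def, sub_smul, one_smul]; abel
      rw [this, norm_smul, Real.norm_eq_abs, abs_of_nonneg (by linarith)]
    -- e y₀ is a nearest point to x
    have hnear : ∀ y' : M, ‖x - e y₀‖ ≤ ‖x - e y'‖ := by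
      intro y'
      have htri : ‖v - e y'‖ ≤ ‖v - x‖ + ‖x - e y'‖ := by
        have := norm_sub_le_norm_sub_add_norm_sub v x (e y')
        simpa using this
      have := hy₀min y'
      rw [hnxy₀]
      rw [hvx] at htri
      nlinarith [norm_nonneg (v - e y₀)]
    -- r x = e y₀
    obtain ⟨y', hy'⟩ := hrmem x hxν
    have h1 := (hmin x hxν y₀).1
    have h2 : ‖x - e y₀‖ ≤ ‖x - r x‖ := by rw [← hy']; exact hnear y'
    have heq : ‖x - r x‖ = ‖x - e y₀‖ := le_antisymm h1 h2
    have hrx : r x = e y₀ := (hmin x hxν y₀).2.1 heq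
    -- fiber description gives orthogonality of t • (v - e y₀), hence of v - e y₀
    obtain ⟨u, huo, hun, hux⟩ := (hfiber y₀ x).1 ⟨hxν, hrx⟩
    have hu : u = t • (v - e y₀) := by
      have : e y₀ + u = e y₀ + t • (v - e y₀) := by rw [← hux, hx_def]
      exact add_left_cancel this
    have horth : ∀ w : TangentSpace (𝓡 n) y₀,
        inner (𝕜 := ℝ) (v - e y₀) (mfderiv (𝓡 n) (𝓡 k) e y₀ w : EuclideanSpace ℝ (Fin k)) = 0 := by
      intro w
      have := huo w
      rw [hu] at this
      replace this := (real_inner_smul_left _ _ t).symm.trans this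
      exact (mul_eq_zero.1 this).resolve_left (ne_of_gt ht0)
    -- fiber description backwards: v ∈ ν, contradiction
    have : v ∈ ν ∧ r v = e y₀ := (hfiber y₀ v).2
      ⟨v - e y₀, horth, hvy₀, by abel⟩
    exact hv this.1
  refine ⟨key, ?_⟩
  simp only [Metric.mem_ball, dist_eq_norm, sub_zero, not_lt]
  exact key
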